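/- If W ~ PD(θ₁,θ₂) and R ~ PD(θ₃,θ₄) are independent Skellam random variables with θ₁θ₄ = θ₂θ₃, then the conditional distribution of W given W+R = z is EB(z, p, θ) with p = θ₁/(θ₁+θ₃) and θ = (θ₁+θ₃)(θ₂+θ₄); that is, P(W=w | W+R=z) = p^w q^{z-w} ₀F̃₁(;w+1;p²θ) ₀F̃₁(;z-w+1;q²θ) / ₀F̃₁(;z+1;θ) with q=1-p. -/

import Mathlib

open MeasureTheory Real

/-- Modified Bessel function of the first kind of integer order `y`:
`I_y(x) = ∑_{k≥0} (x/2)^(y+2k) / (k! * Γ(y+k+1))`, with terms where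
`Γ` is evaluated at a nonpositive integer interpreted as zero. -/
noncomputable def besselI (y : ℤ) (x : ℝ) : ℝ :=
  ∑' k : ℕ, (x / 2) ^ (y + 2 * (k : ℤ)) / ((Nat.factorial k : ℝ) * Real.Gamma ((y : ℝ) + k + 1))

/-- Regularized confluent hypergeometric function `₀F̃₁(; y; θ) = ∑_{k≥0} θ^k/(k! Γ(y+k))`. -/
noncomputable def regF (y : ℝ) (θ : ℝ) : ℝ :=
  ∑' k : ℕ, θ ^ k / ((Nat.factorial k : ℝ) * Real.Gamma (y + k))

/-- Skellam (Poisson difference) pmf `PD(a,b)` at `z`. -/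
noncomputable def skellamPMF (a b : ℝ) (z : ℤ) : ℝ :=
  Real.exp (-a - b) * (a / b) ^ ((z : ℝ) / 2) * besselI z (2 * Real.sqrt (a * b))

/-- Extended binomial pmf `EB(z, p, θ)` at `x`. -/
noncomputable def ebPMF (z : ℤ) (p θ : ℝ) (x : ℤ) : ℝ :=
  p ^ x * (1 - p) ^ (z - x) * regF ((x : ℝ) + 1) (p ^ 2 * θ) *
    regF (((z - x : ℤ) : ℝ) + 1) ((1 - p) ^ 2 * θ) / regF ((z : ℝ) + 1) θ

/-- Key simplification: `skellamPMF a b z = exp(-a-b) · a^z · ₀F̃₁(; z+1; ab)`. -/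
lemma skellam_eq (a b : ℝ) (ha : 0 < a) (hb : 0 < b) (z : ℤ) :
    skellamPMF a b z = Real.exp (-a - b) * a ^ z * regF ((z : ℝ) + 1) (a * b) := by
  have hab : 0 < a * b := mul_pos ha hb
  have h2 : 2 * Real.sqrt (a * b) / 2 = Real.sqrt (a * b) := by ring
  have hs : ∀ k : ℕ, (Real.sqrt (a * b)) ^ (z + 2 * (k : ℤ))
      = (a * b) ^ ((z : ℝ) / 2) * (a * b) ^ k := by
    intro k
    rw [← Real.rpow_intCast (Real.sqrt (a * b)) (z + 2 * k), Real.sqrt_eq_rpow,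
      ← Real.rpow_natCast (a * b) k, ← Real.rpow_mul hab.le, ← Real.rpow_add hab]
    congr 1
    push_cast
    ring
  have hb1 : besselI z (2 * Real.sqrt (a * b))
      = (a * b) ^ ((z : ℝ) / 2) * regF ((z : ℝ) + 1) (a * b) := by
    unfold besselI regF
    rw [← tsum_mul_left]
    congr 1
    ext k
    rw [h2, hs k, mul_div_assoc]
    congr 2
    ring_nf
  rw [skellamPMF, hb1]
  have : (a / b) ^ ((z : ℝ) / 2) * (a * b) ^ ((z : ℝ) / 2) = a ^ z := by
    rw [← Real.mul_rpow (by positivity) (by positivity)]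
    have : a / b * (a * b) = a ^ (2:ℝ) := by
      rw [Real.rpow_two]; field_simp
    rw [this, ← Real.rpow_mul ha.le, ← Real.rpow_intCast a z]
    congr 1
    ring
  calc Real.exp (-a - b) * (a / b) ^ ((z : ℝ) / 2) *
        ((a * b) ^ ((z : ℝ) / 2) * regF ((z : ℝ) + 1) (a * b))
      = Real.exp (-a - b) * ((a / b) ^ ((z : ℝ) / 2) * (a * b) ^ ((z : ℝ) / 2)) *
        regF ((z : ℝ) + 1) (a * b) := by ring
    _ = _ := by rw [this]

theorem eb_is_conditional_of_skellam (θ₁ θ₂ θ₃ θ₄ : ℝ)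
    (h₁ : 0 < θ₁) (h₂ : 0 < θ₂) (h₃ : 0 < θ₃) (h₄ : 0 < θ₄)
    (hconstraint : θ₁ * θ₄ = θ₂ * θ₃) (z w : ℤ) :
    skellamPMF θ₁ θ₂ w * skellamPMF θ₃ θ₄ (z - w) / skellamPMF (θ₁ + θ₃) (θ₂ + θ₄) z
      = ebPMF z (θ₁ / (θ₁ + θ₃)) ((θ₁ + θ₃) * (θ₂ + θ₄)) w := by
  have hs : (0:ℝ) < θ₁ + θ₃ := by linarith
  have hs' : θ₁ + θ₃ ≠ 0 := ne_of_gt hs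
  set p : ℝ := θ₁ / (θ₁ + θ₃) with hp
  have hq : 1 - p = θ₃ / (θ₁ + θ₃) := by rw [hp]; field_simp; ring
  have hp2 : p ^ 2 * ((θ₁ + θ₃) * (θ₂ + θ₄)) = θ₁ * θ₂ := by
    rw [hp]; field_simp; ring_nf; linear_combination hconstraint
  have hq2 : (1 - p) ^ 2 * ((θ₁ + θ₃) * (θ₂ + θ₄)) = θ₃ * θ₄ := by
    rw [hq]; field_simp; ring_nf; linear_combination (-1) * hconstraint
  have hss : (θ₁ + θ₃) ^ w * (θ₁ + θ₃) ^ (z - w) = (θ₁ + θ₃) ^ z := by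
    rw [← zpow_add₀ hs']; congr 1; ring
  have hzpow : θ₁ ^ w * θ₃ ^ (z - w) = p ^ w * (1 - p) ^ (z - w) * (θ₁ + θ₃) ^ z := by
    rw [hp, hq, div_zpow, div_zpow, div_mul_div_comm, div_mul_eq_mul_div, hss,
      mul_div_assoc, div_self (zpow_ne_zero z hs'), mul_one]
  have hexp : Real.exp (-θ₁ - θ₂) * Real.exp (-θ₃ - θ₄)
      = Real.exp (-(θ₁ + θ₃) - (θ₂ + θ₄)) := by
    rw [← Real.exp_add]; ring_nf
  rw [skellam_eq θ₁ θ₂ h₁ h₂ w, skellam_eq θ₃ θ₄ h₃ h₄ (z - w),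
    skellam_eq (θ₁ + θ₃) (θ₂ + θ₄) hs (by linarith) z]
  rw [ebPMF, hp2, hq2]
  set R₁ := regF ((w : ℝ) + 1) (θ₁ * θ₂)
  set R₂ := regF (((z - w : ℤ) : ℝ) + 1) (θ₃ * θ₄)
  set R := regF ((z : ℝ) + 1) ((θ₁ + θ₃) * (θ₂ + θ₄))
  have key : Real.exp (-θ₁ - θ₂) * θ₁ ^ w * R₁ * (Real.exp (-θ₃ - θ₄) * θ₃ ^ (z - w) * R₂)
      = Real.exp (-(θ₁ + θ₃) - (θ₂ + θ₄)) * (θ₁ + θ₃) ^ z *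
        (p ^ w * (1 - p) ^ (z - w) * R₁ * R₂) := by
    linear_combination (Real.exp (-θ₁ - θ₂) * Real.exp (-θ₃ - θ₄) * R₁ * R₂) * hzpow +
      ((θ₁ + θ₃) ^ z * p ^ w * (1 - p) ^ (z - w) * R₁ * R₂) * hexp
  rw [key, mul_div_mul_left _ _
    (mul_ne_zero (Real.exp_ne_zero _) (zpow_ne_zero z hs'))]
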